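/- The function (a,b) ↦ π_FB(|a|, |b|)², where π_FB(s,t) = √(s²+t²) − s − t, is continuously differentiable on ℝ². -/

import Mathlib

noncomputable def piFB (a b : ℝ) : ℝ := Real.sqrt (a ^ 2 + b ^ 2) - a - b

noncomputable def rr (p : ℝ × ℝ) : ℝ := Real.sqrt (p.1 ^ 2 + p.2 ^ 2)

noncomputable def fFB (p : ℝ × ℝ) : ℝ := (rr p - |p.1| - |p.2|) ^ 2

noncomputable def d1 (p : ℝ × ℝ) : ℝ :=
  4 * p.1 * p.2 ^ 2 * |p.2| / (rr p * (rr p + |p.1|) * (rr p + |p.1| + |p.2|))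

noncomputable def d2 (p : ℝ × ℝ) : ℝ :=
  4 * p.2 * p.1 ^ 2 * |p.1| / (rr p * (rr p + |p.2|) * (rr p + |p.2| + |p.1|))

noncomputable def Dmap (p : ℝ × ℝ) : ℝ × ℝ →L[ℝ] ℝ :=
  d1 p • ContinuousLinearMap.fst ℝ ℝ ℝ + d2 p • ContinuousLinearMap.snd ℝ ℝ ℝ

lemma rr_nonneg (p : ℝ × ℝ) : 0 ≤ rr p := Real.sqrt_nonneg _

lemma rr_sq (p : ℝ × ℝ) : rr p ^ 2 = p.1 ^ 2 + p.2 ^ 2 :=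
  Real.sq_sqrt (by positivity)

lemma abs_fst_le_rr (p : ℝ × ℝ) : |p.1| ≤ rr p := by
  rw [← Real.sqrt_sq_eq_abs]
  exact Real.sqrt_le_sqrt (by nlinarith [sq_nonneg p.2])

lemma abs_snd_le_rr (p : ℝ × ℝ) : |p.2| ≤ rr p := by
  rw [← Real.sqrt_sq_eq_abs]
  exact Real.sqrt_le_sqrt (by nlinarith [sq_nonneg p.1])

lemma rr_le_add (p : ℝ × ℝ) : rr p ≤ |p.1| + |p.2| := by
  rw [show |p.1| + |p.2| = Real.sqrt ((|p.1| + |p.2|) ^ 2) from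
    (Real.sqrt_sq (by positivity)).symm]
  apply Real.sqrt_le_sqrt
  have h1 : |p.1| ^ 2 = p.1 ^ 2 := sq_abs _
  have h2 : |p.2| ^ 2 = p.2 ^ 2 := sq_abs _
  nlinarith [abs_nonneg p.1, abs_nonneg p.2]

lemma rr_pos (p : ℝ × ℝ) (hp : p ≠ 0) : 0 < rr p := by
  rcases (rr_nonneg p).lt_or_eq with h | h
  · exact h
  · exfalso
    have := rr_sq p
    rw [← h] at this
    have h1 : p.1 = 0 := by nlinarith [sq_nonneg p.1, sq_nonneg p.2]
    have h2 : p.2 = 0 := by nlinarith [sq_nonneg p.1, sq_nonneg p.2]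
    exact hp (Prod.ext h1 h2)

lemma fFB_nonneg (p : ℝ × ℝ) : 0 ≤ fFB p := sq_nonneg _

lemma fFB_le_fst_sq (p : ℝ × ℝ) : fFB p ≤ p.1 ^ 2 := by
  have h1 := rr_le_add p
  have h2 := abs_snd_le_rr p
  have : abs (rr p - |p.1| - |p.2|) ≤ |p.1| := by
    rw [abs_le]
    refine ⟨by linarith, by linarith [abs_nonneg p.1]⟩
  calc fFB p = abs (rr p - |p.1| - |p.2|) ^ 2 := (sq_abs _).symm
  _ ≤ |p.1| ^ 2 := by gcongr
  _ = p.1 ^ 2 := sq_abs _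

lemma fFB_le_snd_sq (p : ℝ × ℝ) : fFB p ≤ p.2 ^ 2 := by
  have h1 := rr_le_add p
  have h2 := abs_fst_le_rr p
  have : abs (rr p - |p.1| - |p.2|) ≤ |p.2| := by
    rw [abs_le]
    refine ⟨by linarith, by linarith [abs_nonneg p.2]⟩
  calc fFB p = abs (rr p - |p.1| - |p.2|) ^ 2 := (sq_abs _).symm
  _ ≤ |p.2| ^ 2 := by gcongr
  _ = p.2 ^ 2 := sq_abs _

lemma f_eq : (fun p : ℝ × ℝ => (piFB |p.1| |p.2|) ^ 2) = fFB := by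
  funext p
  simp [piFB, fFB, rr, sq_abs]

lemma fFB_axis (p : ℝ × ℝ) (hp : p.1 = 0 ∨ p.2 = 0) : fFB p = 0 := by
  rcases hp with h | h
  · have := fFB_le_fst_sq p
    have := fFB_nonneg p
    nlinarith [sq_nonneg p.1]
  · have := fFB_le_snd_sq p
    have := fFB_nonneg p
    nlinarith [sq_nonneg p.2]

lemma Dmap_axis (p : ℝ × ℝ) (hp : p.1 = 0 ∨ p.2 = 0) : Dmap p = 0 := by
  have h1 : d1 p = 0 := by
    rcases hp with h | h <;> simp [d1, h]
  have h2 : d2 p = 0 := by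
    rcases hp with h | h <;> simp [d2, h]
  simp [Dmap, h1, h2]

lemma hasFDerivAt_axis (p : ℝ × ℝ) (hp : p.1 = 0 ∨ p.2 = 0) :
    HasFDerivAt fFB (Dmap p) p := by
  rw [Dmap_axis p hp, hasFDerivAt_iff_isLittleO_nhds_zero]
  rw [Asymptotics.isLittleO_iff]
  intro c hc
  have hball : Metric.ball (0 : ℝ × ℝ) c ∈ nhds (0 : ℝ × ℝ) := Metric.ball_mem_nhds _ hc
  filter_upwards [hball] with h hh
  rw [mem_ball_zero_iff] at hh
  have hfp : fFB p = 0 := fFB_axis p hp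
  have key : fFB (p + h) ≤ ‖h‖ ^ 2 := by
    rcases hp with h0 | h0
    · calc fFB (p + h) ≤ (p + h).1 ^ 2 := fFB_le_fst_sq _
      _ = h.1 ^ 2 := by simp [h0]
      _ = |h.1| ^ 2 := (sq_abs _).symm
      _ ≤ ‖h‖ ^ 2 := by
          have : |h.1| ≤ ‖h‖ := norm_fst_le h
          gcongr
    · calc fFB (p + h) ≤ (p + h).2 ^ 2 := fFB_le_snd_sq _
      _ = h.2 ^ 2 := by simp [h0]
      _ = |h.2| ^ 2 := (sq_abs _).symm
      _ ≤ ‖h‖ ^ 2 := by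
          have : |h.2| ≤ ‖h‖ := norm_snd_le h
          gcongr
  have hnn := fFB_nonneg (p + h)
  simp only [hfp, ContinuousLinearMap.zero_apply, sub_zero]
  rw [Real.norm_eq_abs, abs_of_nonneg hnn]
  calc fFB (p + h) ≤ ‖h‖ ^ 2 := key
  _ = ‖h‖ * ‖h‖ := sq ‖h‖ ▸ by ring
  _ ≤ c * ‖h‖ := by
      apply mul_le_mul_of_nonneg_right (le_of_lt hh) (norm_nonneg _)

lemma coeff1 (A B r ε : ℝ) (hr : 0 < r) (hrr : r ^ 2 = A ^ 2 + B ^ 2)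
    (hA0 : 0 ≤ A) (hB0 : 0 ≤ B) :
    4 * (ε * A) * B ^ 2 * B / (r * (r + A) * (r + A + B)) = 2 * (r - A - B) * ((ε * A) / r - ε) := by
  have h1 : 0 < r + A := by linarith
  have h2 : 0 < r + A + B := by linarith
  field_simp
  linear_combination (-2*ε*(2*A*B + A^2 - r^2)) * hrr

lemma hasFDerivAt_generic (p : ℝ × ℝ) (h1 : p.1 ≠ 0) (h2 : p.2 ≠ 0) :
    HasFDerivAt fFB (Dmap p) p := by
  have hrpos : 0 < rr p := by
    rw [rr]
    have : 0 < p.1 ^ 2 + p.2 ^ 2 := by positivity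
    exact Real.sqrt_pos.mpr this
  set ε : ℝ := if 0 < p.1 then 1 else -1 with hεdef
  set δ : ℝ := if 0 < p.2 then 1 else -1 with hδdef
  have hε2 : ε * ε = 1 := by rw [hεdef]; split_ifs <;> norm_num
  have hδ2 : δ * δ = 1 := by rw [hδdef]; split_ifs <;> norm_num
  have hεa : |p.1| = ε * p.1 := by
    rw [hεdef]; rcases h1.lt_or_gt with h | h
    · rw [if_neg (by linarith), abs_of_neg h]; ring
    · rw [if_pos h, abs_of_pos h]; ring
  have hδb : |p.2| = δ * p.2 := by
    rw [hδdef]; rcases h2.lt_or_gt with h | h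
    · rw [if_neg (by linarith), abs_of_neg h]; ring
    · rw [if_pos h, abs_of_pos h]; ring
  have hev1 : ∀ᶠ q : ℝ × ℝ in nhds p, |q.1| = ε * q.1 := by
    rcases h1.lt_or_gt with h | h
    · have hev : ∀ᶠ q : ℝ × ℝ in nhds p, q.1 < 0 :=
        (continuous_fst.continuousAt).eventually_lt continuousAt_const h
      filter_upwards [hev] with q hq
      rw [abs_of_neg hq, hεdef, if_neg (by linarith)]; ring
    · have hev : ∀ᶠ q : ℝ × ℝ in nhds p, 0 < q.1 :=
        (continuousAt_const).eventually_lt (continuous_fst.continuousAt) h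
      filter_upwards [hev] with q hq
      rw [abs_of_pos hq, hεdef, if_pos h]; ring
  have hev2 : ∀ᶠ q : ℝ × ℝ in nhds p, |q.2| = δ * q.2 := by
    rcases h2.lt_or_gt with h | h
    · have hev : ∀ᶠ q : ℝ × ℝ in nhds p, q.2 < 0 :=
        (continuous_snd.continuousAt).eventually_lt continuousAt_const h
      filter_upwards [hev] with q hq
      rw [abs_of_neg hq, hδdef, if_neg (by linarith)]; ring
    · have hev : ∀ᶠ q : ℝ × ℝ in nhds p, 0 < q.2 :=
        (continuousAt_const).eventually_lt (continuous_snd.continuousAt) h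
      filter_upwards [hev] with q hq
      rw [abs_of_pos hq, hδdef, if_pos h]; ring
  have hx : HasFDerivAt (fun q : ℝ × ℝ => q.1 ^ 2 + q.2 ^ 2)
      ((p.1 • ContinuousLinearMap.fst ℝ ℝ ℝ + p.1 • ContinuousLinearMap.fst ℝ ℝ ℝ) +
       (p.2 • ContinuousLinearMap.snd ℝ ℝ ℝ + p.2 • ContinuousLinearMap.snd ℝ ℝ ℝ)) p := by
    have := ((hasFDerivAt_fst (𝕜 := ℝ) (p := p)).mul (hasFDerivAt_fst)).add
      ((hasFDerivAt_snd (𝕜 := ℝ) (p := p)).mul (hasFDerivAt_snd))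
    apply this.congr_of_eventuallyEq
    filter_upwards with q
    simp only [Pi.add_apply, Pi.mul_apply]
    ring
  have hne : p.1 ^ 2 + p.2 ^ 2 ≠ 0 := by positivity
  have hrq := (Real.hasDerivAt_sqrt hne).comp_hasFDerivAt p hx
  have hrq' : HasFDerivAt rr
      ((1 / (2 * rr p)) • ((p.1 • ContinuousLinearMap.fst ℝ ℝ ℝ + p.1 • ContinuousLinearMap.fst ℝ ℝ ℝ) +
       (p.2 • ContinuousLinearMap.snd ℝ ℝ ℝ + p.2 • ContinuousLinearMap.snd ℝ ℝ ℝ))) p := hrq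
  have hg : HasFDerivAt (fun q : ℝ × ℝ => rr q - ε * q.1 - δ * q.2)
      ((1 / (2 * rr p)) • ((p.1 • ContinuousLinearMap.fst ℝ ℝ ℝ + p.1 • ContinuousLinearMap.fst ℝ ℝ ℝ) +
       (p.2 • ContinuousLinearMap.snd ℝ ℝ ℝ + p.2 • ContinuousLinearMap.snd ℝ ℝ ℝ))
       - ε • ContinuousLinearMap.fst ℝ ℝ ℝ - δ • ContinuousLinearMap.snd ℝ ℝ ℝ) p := by
    have hf1 : HasFDerivAt (fun q : ℝ × ℝ => ε * q.1) (ε • ContinuousLinearMap.fst ℝ ℝ ℝ) p := by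
      simpa using (hasFDerivAt_fst (𝕜 := ℝ) (p := p)).const_mul ε
    have hf2 : HasFDerivAt (fun q : ℝ × ℝ => δ * q.2) (δ • ContinuousLinearMap.snd ℝ ℝ ℝ) p := by
      simpa using (hasFDerivAt_snd (𝕜 := ℝ) (p := p)).const_mul δ
    exact (hrq'.sub hf1).sub hf2
  have hF := hg.mul hg
  have heq : fFB =ᶠ[nhds p]
      (fun q : ℝ × ℝ => (rr q - ε * q.1 - δ * q.2) * (rr q - ε * q.1 - δ * q.2)) := by
    filter_upwards [hev1, hev2] with q hq1 hq2
    rw [fFB, hq1, hq2]; ring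
  have hfinal := hF.congr_of_eventuallyEq heq
  refine hfinal.congr_fderiv ?_
  symm
  apply ContinuousLinearMap.ext
  intro v
  have hrr2 := rr_sq p
  have c1 := coeff1 |p.1| |p.2| (rr p) ε hrpos
    (by rw [hrr2, sq_abs, sq_abs]) (abs_nonneg _) (abs_nonneg _)
  have c2 := coeff1 |p.2| |p.1| (rr p) δ
    hrpos (by rw [hrr2, sq_abs, sq_abs]; ring) (abs_nonneg _) (abs_nonneg _)
  rw [show ε * |p.1| = p.1 by rw [hεa, ← mul_assoc, hε2]; ring] at c1
  rw [show δ * |p.2| = p.2 by rw [hδb, ← mul_assoc, hδ2]; ring] at c2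
  rw [sq_abs] at c1 c2
  simp only [Dmap, ContinuousLinearMap.add_apply, ContinuousLinearMap.smul_apply,
    ContinuousLinearMap.coe_fst', ContinuousLinearMap.coe_snd', ContinuousLinearMap.sub_apply,
    smul_eq_mul, d1, d2]
  rw [← hεa, ← hδb]
  linear_combination v.1 * c1 + v.2 * c2

lemma rr_continuous : Continuous rr :=
  Real.continuous_sqrt.comp ((continuous_fst.pow 2).add (continuous_snd.pow 2))

lemma abs_d1_le (p : ℝ × ℝ) : |d1 p| ≤ 4 * rr p := by
  by_cases hp : p = 0
  · subst hp
    simp [d1, rr]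
  · have hr := rr_pos p hp
    have e1 := abs_fst_le_rr p
    have e2 := abs_snd_le_rr p
    have e3 : p.2 ^ 2 ≤ rr p ^ 2 := by nlinarith [rr_sq p, sq_nonneg p.1]
    have hdenpos : 0 < rr p * (rr p + |p.1|) * (rr p + |p.1| + |p.2|) := by
      have := abs_nonneg p.1
      have := abs_nonneg p.2
      positivity
    rw [d1, abs_div, abs_of_pos hdenpos]
    have hnum : abs (4 * p.1 * p.2 ^ 2 * |p.2|) ≤ 4 * rr p * rr p ^ 2 * rr p := by
      have : abs (4 * p.1 * p.2 ^ 2 * |p.2|) = 4 * |p.1| * p.2 ^ 2 * |p.2| := by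
        rw [abs_mul, abs_mul, abs_mul, abs_abs]
        simp [abs_of_nonneg (sq_nonneg p.2), abs_of_nonneg (by norm_num : (0:ℝ) ≤ 4)]
      rw [this]
      gcongr <;> first | positivity | assumption
    have hden : rr p ^ 3 ≤ rr p * (rr p + |p.1|) * (rr p + |p.1| + |p.2|) := by
      nlinarith [abs_nonneg p.1, abs_nonneg p.2, hr.le, mul_nonneg hr.le (abs_nonneg p.1),
        mul_nonneg (abs_nonneg p.1) (abs_nonneg p.2), mul_nonneg hr.le (abs_nonneg p.2)]
    calc abs (4 * p.1 * p.2 ^ 2 * |p.2|) / (rr p * (rr p + |p.1|) * (rr p + |p.1| + |p.2|))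
        ≤ (4 * rr p * rr p ^ 2 * rr p) / rr p ^ 3 :=
          div_le_div₀ (by positivity) hnum (by positivity) hden
      _ = 4 * rr p := by field_simp

lemma abs_d2_le (p : ℝ × ℝ) : |d2 p| ≤ 4 * rr p := by
  by_cases hp : p = 0
  · subst hp
    simp [d2, rr]
  · have hr := rr_pos p hp
    have e1 := abs_fst_le_rr p
    have e2 := abs_snd_le_rr p
    have e3 : p.1 ^ 2 ≤ rr p ^ 2 := by nlinarith [rr_sq p, sq_nonneg p.2]
    have hdenpos : 0 < rr p * (rr p + |p.2|) * (rr p + |p.2| + |p.1|) := by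
      have := abs_nonneg p.1
      have := abs_nonneg p.2
      positivity
    rw [d2, abs_div, abs_of_pos hdenpos]
    have hnum : abs (4 * p.2 * p.1 ^ 2 * |p.1|) ≤ 4 * rr p * rr p ^ 2 * rr p := by
      have : abs (4 * p.2 * p.1 ^ 2 * |p.1|) = 4 * |p.2| * p.1 ^ 2 * |p.1| := by
        rw [abs_mul, abs_mul, abs_mul, abs_abs]
        simp [abs_of_nonneg (sq_nonneg p.1), abs_of_nonneg (by norm_num : (0:ℝ) ≤ 4)]
      rw [this]
      gcongr <;> first | positivity | assumption
    have hden : rr p ^ 3 ≤ rr p * (rr p + |p.2|) * (rr p + |p.2| + |p.1|) := by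
      nlinarith [abs_nonneg p.1, abs_nonneg p.2, hr.le, mul_nonneg hr.le (abs_nonneg p.2),
        mul_nonneg (abs_nonneg p.1) (abs_nonneg p.2), mul_nonneg hr.le (abs_nonneg p.1)]
    calc abs (4 * p.2 * p.1 ^ 2 * |p.1|) / (rr p * (rr p + |p.2|) * (rr p + |p.2| + |p.1|))
        ≤ (4 * rr p * rr p ^ 2 * rr p) / rr p ^ 3 :=
          div_le_div₀ (by positivity) hnum (by positivity) hden
      _ = 4 * rr p := by field_simp

lemma cont_d1 : Continuous d1 := by
  rw [continuous_iff_continuousAt]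
  intro p
  by_cases hp : p = 0
  · subst hp
    rw [ContinuousAt]
    have hd0 : d1 0 = 0 := by simp [d1, rr]
    rw [hd0]
    apply squeeze_zero_norm (fun q => abs_d1_le q)
    have : Filter.Tendsto (fun q : ℝ × ℝ => 4 * rr q) (nhds 0) (nhds (4 * rr 0)) :=
      (rr_continuous.const_smul (4:ℝ)).continuousAt
    simpa [rr] using this
  · have hr := rr_pos p hp
    apply ContinuousAt.div
    · exact (((continuous_const.mul continuous_fst).mul (continuous_snd.pow 2)).mul
        continuous_snd.abs).continuousAt
    · exact ((rr_continuous.mul (rr_continuous.add continuous_fst.abs)).mul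
        ((rr_continuous.add continuous_fst.abs).add continuous_snd.abs)).continuousAt
    · have h1 := abs_nonneg p.1
      have h2 := abs_nonneg p.2
      positivity

lemma cont_d2 : Continuous d2 := by
  rw [continuous_iff_continuousAt]
  intro p
  by_cases hp : p = 0
  · subst hp
    rw [ContinuousAt]
    have hd0 : d2 0 = 0 := by simp [d2, rr]
    rw [hd0]
    apply squeeze_zero_norm (fun q => abs_d2_le q)
    have : Filter.Tendsto (fun q : ℝ × ℝ => 4 * rr q) (nhds 0) (nhds (4 * rr 0)) :=
      (rr_continuous.const_smul (4:ℝ)).continuousAt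
    simpa [rr] using this
  · have hr := rr_pos p hp
    apply ContinuousAt.div
    · exact (((continuous_const.mul continuous_snd).mul (continuous_fst.pow 2)).mul
        continuous_fst.abs).continuousAt
    · exact ((rr_continuous.mul (rr_continuous.add continuous_snd.abs)).mul
        ((rr_continuous.add continuous_snd.abs).add continuous_fst.abs)).continuousAt
    · have h1 := abs_nonneg p.1
      have h2 := abs_nonneg p.2
      positivity

lemma cont_Dmap : Continuous Dmap :=
  (cont_d1.smul continuous_const).add (cont_d2.smul continuous_const)

theorem stmt_17 : ContDiff ℝ 1 (fun p : ℝ × ℝ => (piFB |p.1| |p.2|) ^ 2) := by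
  rw [f_eq, contDiff_one_iff_fderiv]
  have hD : ∀ p : ℝ × ℝ, HasFDerivAt fFB (Dmap p) p := by
    intro p
    by_cases h1 : p.1 = 0
    · exact hasFDerivAt_axis p (Or.inl h1)
    · by_cases h2 : p.2 = 0
      · exact hasFDerivAt_axis p (Or.inr h2)
      · exact hasFDerivAt_generic p h1 h2
  refine ⟨fun p => (hD p).differentiableAt, ?_⟩
  have hfd : fderiv ℝ fFB = Dmap := funext fun p => (hD p).fderiv
  rw [hfd]
  exact cont_Dmap
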